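/- Let ℓ ≥ 2 and let h ∈ ℤ[x₁,...,x_ℓ] with h(0) = 0. Suppose the highest degree homogeneous part h^k and the lowest degree nonzero homogeneous part h^j of h are both smooth (over the algebraic closure of ℚ). Then, choosing z_p = 0 for all primes p, there is a finite set of primes X such that for all primes p ∉ X and all d ∈ ℕ, the reduction of the auxiliary polynomial h_d(x) = h(d·x)/d^j modulo p is Deligne. -/

import Mathlib

open MvPolynomial

/-- A homogeneous polynomial (or any polynomial, applied to a homogeneous part) over a
field `F` is smooth if the system `g = ∂g/∂x₁ = ⋯ = ∂g/∂x_ℓ = 0` has no nonzero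
solution over the algebraic closure of `F`. -/
def IsSmoothPoly {F : Type*} [Field F] {ℓ : ℕ} (g : MvPolynomial (Fin ℓ) F) : Prop :=
  ∀ x : Fin ℓ → AlgebraicClosure F,
    eval x (map (algebraMap F (AlgebraicClosure F)) g) = 0 →
    (∀ i, eval x (map (algebraMap F (AlgebraicClosure F)) (pderiv i g)) = 0) →
    x = 0

/-- A polynomial `h` of degree `k` over a field `F` is Deligne if `char F` does not
divide `k` and the degree-`k` homogeneous part of `h` is smooth. -/
def IsDelignePoly {F : Type*} [Field F] {ℓ : ℕ} (h : MvPolynomial (Fin ℓ) F) : Prop :=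
  ¬ (ringChar F ∣ h.totalDegree) ∧ IsSmoothPoly (homogeneousComponent h.totalDegree h)

variable {ℓ : ℕ} {K : Type*} [Field K] [Algebra ℚ K]

lemma coeff_scale (d : ℤ) (h : MvPolynomial (Fin ℓ) ℤ) (m : Fin ℓ →₀ ℕ) :
    coeff m (bind₁ (fun i => C d * X i : Fin ℓ → MvPolynomial (Fin ℓ) ℤ) h)
      = d ^ m.degree * coeff m h := by
  induction h using MvPolynomial.induction_on' with
  | monomial m' c =>
    rw [bind₁_monomial]
    have hprod : (∏ i ∈ m'.support, (C d * X i : MvPolynomial (Fin ℓ) ℤ) ^ m' i)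
        = C (d ^ m'.degree) * monomial m' 1 := by
      calc (∏ i ∈ m'.support, (C d * X i : MvPolynomial (Fin ℓ) ℤ) ^ m' i)
          = (∏ i ∈ m'.support, (C d : MvPolynomial (Fin ℓ) ℤ) ^ m' i)
            * ∏ i ∈ m'.support, (X i : MvPolynomial (Fin ℓ) ℤ) ^ m' i := by
            rw [← Finset.prod_mul_distrib]; simp [mul_pow]
        _ = C (d ^ m'.degree) * monomial m' 1 := by
            congr 1
            · simp only [← C_pow, ← map_prod, Finset.prod_pow_eq_pow_sum, Finsupp.degree]; rfl
            · rw [monomial_eq, map_one, one_mul, Finsupp.prod]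
    rw [hprod, ← mul_assoc, mul_comm (C c), mul_assoc, C_mul_monomial, C_mul_monomial]
    rw [coeff_monomial, coeff_monomial]
    split_ifs with hm
    · subst hm; ring
    · ring
  | add p q hp hq => rw [map_add, coeff_add, hp, hq, coeff_add, mul_add]

lemma comp_scale (d : ℤ) (h : MvPolynomial (Fin ℓ) ℤ) (n : ℕ) :
    homogeneousComponent n (bind₁ (fun i => C d * X i : Fin ℓ → MvPolynomial (Fin ℓ) ℤ) h)
      = C (d ^ n) * homogeneousComponent n h := by
  apply MvPolynomial.ext
  intro m
  rw [coeff_homogeneousComponent, coeff_C_mul, coeff_homogeneousComponent]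
  split_ifs with hm
  · rw [coeff_scale, hm]
  · rw [mul_zero]

lemma hd_comp (d : ℕ) (hd0 : 0 < d) (j : ℕ) (h hd : MvPolynomial (Fin ℓ) ℤ)
    (hjmin : ∀ i < j, homogeneousComponent i h = 0)
    (heval : ∀ y : Fin ℓ → ℤ, (d : ℤ) ^ j * eval y hd = eval (fun i => (d : ℤ) * y i) h) :
    ∀ n, homogeneousComponent n hd
      = C ((d:ℤ) ^ (n - j)) * homogeneousComponent n h := by
  have hmain : C ((d:ℤ)^j) * hd = bind₁ (fun i => C (d:ℤ) * X i : Fin ℓ → MvPolynomial (Fin ℓ) ℤ) h := by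
    apply MvPolynomial.funext
    intro y
    rw [eval_mul, eval_C, heval y]
    conv_rhs => rw [eval]
    rw [eval₂Hom_bind₁]
    simp only [map_mul, eval₂Hom_C, eval₂Hom_X', RingHom.id_apply]
    rfl
  intro n
  have h2 : C ((d:ℤ)^j) * homogeneousComponent n hd = C ((d:ℤ)^n) * homogeneousComponent n h := by
    rw [← homogeneousComponent_C_mul, hmain, comp_scale]
  rcases lt_or_ge n j with hn | hn
  · rw [hjmin n hn, mul_zero]
    have : C ((d:ℤ)^j) * homogeneousComponent n hd = 0 := by rw [h2, hjmin n hn, mul_zero]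
    have hC : (C ((d:ℤ)^j) : MvPolynomial (Fin ℓ) ℤ) ≠ 0 := by
      simp only [ne_eq, C_eq_zero]
      positivity
    exact (mul_eq_zero.mp this).resolve_left hC
  · have hC : (C ((d:ℤ)^j) : MvPolynomial (Fin ℓ) ℤ) ≠ 0 := by
      simp only [ne_eq, C_eq_zero]
      positivity
    apply mul_left_cancel₀ hC
    rw [h2, ← mul_assoc, ← C_mul, ← pow_add]
    congr 3
    omega


lemma exists_proj (K : Type*) [Field K] [Algebra ℚ K] :
    ∃ π : K →ₗ[ℚ] ℚ, ∀ q : ℚ, π (algebraMap ℚ K q) = q := by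
  obtain ⟨T, hT⟩ := Submodule.exists_isCompl (ℚ ∙ (1 : K))
  let pr := (ℚ ∙ (1 : K)).linearProjOfIsCompl T hT
  let e := LinearEquiv.toSpanNonzeroSingleton ℚ K 1 one_ne_zero
  refine ⟨e.symm.toLinearMap ∘ₗ pr, fun q => ?_⟩
  have h1 : algebraMap ℚ K q = q • (1 : K) := by rw [Algebra.algebraMap_eq_smul_one]
  have hmem : (1 : K) ∈ (ℚ ∙ (1 : K)) := Submodule.mem_span_singleton_self 1
  have hpr : pr (1 : K) = ⟨1, hmem⟩ := Submodule.linearProjOfIsCompl_apply_left hT ⟨1, hmem⟩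
  simp only [LinearMap.coe_comp, Function.comp_apply, h1, map_smul, hpr]
  have : (⟨1, hmem⟩ : (ℚ ∙ (1:K))) = e 1 := (LinearEquiv.toSpanNonzeroSingleton_one ℚ K 1 one_ne_zero).symm
  rw [this]
  simp

noncomputable def Phi (π : K →ₗ[ℚ] ℚ) (P : MvPolynomial (Fin ℓ) K) :
    MvPolynomial (Fin ℓ) ℚ :=
  ∑ m ∈ P.support, monomial m (π (coeff m P))

lemma coeff_Phi (π : K →ₗ[ℚ] ℚ) (P : MvPolynomial (Fin ℓ) K) (m : Fin ℓ →₀ ℕ) :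
    coeff m (Phi π P) = π (coeff m P) := by
  rw [Phi, coeff_sum]
  simp_rw [coeff_monomial]
  rw [Finset.sum_ite_eq' P.support m (fun m' => π (coeff m' P))]
  split_ifs with hs
  · rfl
  · rw [MvPolynomial.notMem_support_iff.mp hs, map_zero]

lemma Phi_mul_map (π : K →ₗ[ℚ] ℚ) (P : MvPolynomial (Fin ℓ) K)
    (f : MvPolynomial (Fin ℓ) ℚ) :
    Phi π (P * map (algebraMap ℚ K) f) = Phi π P * f := by
  apply MvPolynomial.ext; intro m
  rw [coeff_Phi, coeff_mul, coeff_mul, map_sum]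
  apply Finset.sum_congr rfl
  intro x _
  rw [coeff_map, coeff_Phi]
  have hsm : coeff x.1 P * algebraMap ℚ K (coeff x.2 f)
      = coeff x.2 f • coeff x.1 P := by
    rw [Algebra.smul_def]; ring
  rw [hsm, map_smul, smul_eq_mul]; ring

lemma Phi_map (π : K →ₗ[ℚ] ℚ) (hπ : ∀ q : ℚ, π (algebraMap ℚ K q) = q)
    (f : MvPolynomial (Fin ℓ) ℚ) : Phi π (map (algebraMap ℚ K) f) = f := by
  apply MvPolynomial.ext; intro m
  rw [coeff_Phi, coeff_map, hπ]

lemma exists_denom (b : MvPolynomial (Fin ℓ) ℚ) :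
    ∃ D : ℤ, 0 < D ∧ ∃ a : MvPolynomial (Fin ℓ) ℤ,
      map (Int.castRingHom ℚ) a = C (D : ℚ) * b := by
  induction b using MvPolynomial.induction_on with
  | C q =>
    refine ⟨q.den, by exact_mod_cast q.den_pos, C q.num, ?_⟩
    rw [map_C, ← C_mul]
    congr 1
    have hden : ((q.den : ℚ)) ≠ 0 := by exact_mod_cast q.den_nz
    have hnum : ((q.num : ℚ)) = q * q.den := (div_eq_iff hden).mp (Rat.num_div_den q)
    simp only [Int.coe_castRingHom]
    rw [hnum]; push_cast; ring
  | add p q hp hq =>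
    obtain ⟨D1, h1, a1, e1⟩ := hp
    obtain ⟨D2, h2, a2, e2⟩ := hq
    refine ⟨D1 * D2, mul_pos h1 h2, C D2 * a1 + C D1 * a2, ?_⟩
    rw [map_add, map_mul, map_mul, map_C, map_C, e1, e2]
    push_cast
    simp only [eq_intCast, C_mul]
    ring
  | mul_X p i hp =>
    obtain ⟨D, hD, a, e⟩ := hp
    refine ⟨D, hD, a * X i, ?_⟩
    rw [map_mul, map_X, e]
    ring

lemma int_map_comp {R S : Type*} [CommRing R] [CommRing S] (φ : ℤ →+* R) (ψ : R →+* S)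
    (q : MvPolynomial (Fin ℓ) ℤ) :
    map ψ (map φ q) = map (Int.castRingHom S) q := by
  rw [map_map]
  exact congrArg (fun ρ : ℤ →+* S => map ρ q) (Subsingleton.elim _ _)

lemma partA (g : MvPolynomial (Fin ℓ) ℤ)
    (hs : IsSmoothPoly (map (Int.castRingHom ℚ) g)) :
    ∃ c : ℤ, c ≠ 0 ∧ ∀ (p : ℕ) [Fact p.Prime], ¬ ((p : ℤ) ∣ c) →
      IsSmoothPoly (map (Int.castRingHom (ZMod p)) g) := by
  classical
  set K := AlgebraicClosure ℚ with hK
  let f : Option (Fin ℓ) → MvPolynomial (Fin ℓ) ℤ := fun t => t.elim g fun i => pderiv i g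
  let G : Option (Fin ℓ) → MvPolynomial (Fin ℓ) K := fun t => map (Int.castRingHom K) (f t)
  let I : Ideal (MvPolynomial (Fin ℓ) K) := Ideal.span (Set.range G)
  -- zero locus is trivial
  have hzl : ∀ x ∈ zeroLocus K I, x = (0 : Fin ℓ → K) := by
    intro x hx
    have hgen : ∀ t, eval x (G t) = 0 := fun t => hx (G t) (Ideal.subset_span ⟨t, rfl⟩)
    apply hs x
    · rw [int_map_comp]
      exact hgen none
    · intro i
      rw [pderiv_map, int_map_comp]
      exact hgen (some i)
  -- Nullstellensatz
  have hX : ∀ i : Fin ℓ, ∃ (N : ℕ) (D : ℤ) (a : Option (Fin ℓ) → MvPolynomial (Fin ℓ) ℤ),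
      D ≠ 0 ∧ C D * (X i : MvPolynomial (Fin ℓ) ℤ) ^ N = ∑ t, a t * f t := by
    intro i
    have hrad : (X i : MvPolynomial (Fin ℓ) K) ∈ I.radical := by
      rw [← vanishingIdeal_zeroLocus_eq_radical (K := K), mem_vanishingIdeal_iff]
      intro x hx
      rw [aeval_X]
      exact congrFun (hzl x hx) i
    obtain ⟨N, hN⟩ := Ideal.mem_radical_iff.mp hrad
    have hN1 : (X i : MvPolynomial (Fin ℓ) K) ^ (N + 1) ∈ I := by
      rw [pow_succ]
      exact Ideal.mul_mem_right _ I hN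
    obtain ⟨cc, hcc⟩ := Ideal.mem_span_range_iff_exists_fun.mp hN1
    -- descend to ℚ
    obtain ⟨π, hπ⟩ := exists_proj K
    have hGQ : ∀ t, G t = map (algebraMap ℚ K) (map (Int.castRingHom ℚ) (f t)) :=
      fun t => (int_map_comp _ _ _).symm
    have hQid : (X i : MvPolynomial (Fin ℓ) ℚ) ^ (N + 1)
        = ∑ t, Phi π (cc t) * map (Int.castRingHom ℚ) (f t) := by
      have h1 : Phi π ((X i : MvPolynomial (Fin ℓ) K) ^ (N + 1))
          = (X i : MvPolynomial (Fin ℓ) ℚ) ^ (N + 1) := by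
        have : ((X i : MvPolynomial (Fin ℓ) K) ^ (N + 1))
            = map (algebraMap ℚ K) ((X i : MvPolynomial (Fin ℓ) ℚ) ^ (N + 1)) := by
          rw [map_pow, map_X]
        rw [this, Phi_map π hπ]
      rw [← h1, ← hcc]
      have hsum : Phi π (∑ t, cc t * G t) = ∑ t, Phi π (cc t * G t) := by
        apply MvPolynomial.ext; intro m
        rw [coeff_Phi, coeff_sum, coeff_sum, map_sum]
        exact Finset.sum_congr rfl fun t _ => (coeff_Phi π _ m).symm
      rw [hsum]
      exact Finset.sum_congr rfl fun t _ => by rw [hGQ t, Phi_mul_map]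
    -- clear denominators
    choose Dt hDt at_ hat using fun t => exists_denom (ℓ := ℓ) (Phi π (cc t))
    refine ⟨N + 1, ∏ t, Dt t, fun t => C (∏ s ∈ Finset.univ.erase t, Dt s) * at_ t, ?_, ?_⟩
    · exact ne_of_gt (Finset.prod_pos fun t _ => hDt t)
    · apply MvPolynomial.map_injective (Int.castRingHom ℚ) Int.cast_injective
      rw [map_mul, map_C, map_pow, map_X, hQid, Finset.mul_sum, map_sum]
      apply Finset.sum_congr rfl
      intro t _
      rw [map_mul, map_mul, map_C, hat t]
      rw [show (∏ t, Dt t) = (∏ s ∈ Finset.univ.erase t, Dt s) * Dt t from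
        (Finset.prod_erase_mul _ _ (Finset.mem_univ t)).symm]
      simp only [eq_intCast, map_intCast]
      push_cast
      ring
  choose N D a hD hid using hX
  refine ⟨∏ i, D i, Finset.prod_ne_zero_iff.mpr fun i _ => hD i, ?_⟩
  intro p hp hdvd x hx0 hx1
  have hFp : ∀ t, eval x (map (Int.castRingHom (AlgebraicClosure (ZMod p))) (f t)) = 0 := by
    intro t
    match t with
    | none =>
      have hh := hx0
      rw [int_map_comp] at hh
      exact hh
    | some i =>
      have hh := hx1 i
      rw [pderiv_map, int_map_comp] at hh
      exact hh
  funext i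
  have key := congrArg (eval x ∘ map (Int.castRingHom (AlgebraicClosure (ZMod p)))) (hid i)
  simp only [Function.comp_apply, map_mul, map_pow, map_C, map_X, map_sum, eval_mul, eval_pow,
    eval_C, eval_X, eval_sum] at key
  rw [Finset.sum_congr rfl (fun t _ => by rw [hFp t, mul_zero]), Finset.sum_const_zero] at key
  have hZne : ((D i : ℤ) : ZMod p) ≠ 0 := by
    rw [ne_eq, ZMod.intCast_zmod_eq_zero_iff_dvd]
    exact fun hc => hdvd (hc.trans (Finset.dvd_prod_of_mem D (Finset.mem_univ i)))
  have hDne : ((D i : ℤ) : AlgebraicClosure (ZMod p)) ≠ 0 := by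
    have heq : ((D i : ℤ) : AlgebraicClosure (ZMod p))
        = algebraMap (ZMod p) _ ((D i : ℤ) : ZMod p) := (map_intCast _ _).symm
    rw [heq]
    exact fun hh => hZne ((map_eq_zero_iff _ (algebraMap (ZMod p) (AlgebraicClosure (ZMod p))).injective).mp hh)
  have hxpow : x i ^ (N i) = 0 := (mul_eq_zero.mp key).resolve_left hDne
  by_contra hxne
  exact (pow_ne_zero _ hxne) hxpow

lemma map_homComp {R S : Type*} [CommRing R] [CommRing S] (φ : R →+* S)
    (q : MvPolynomial (Fin ℓ) R) (n : ℕ) :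
    homogeneousComponent n (map φ q) = map φ (homogeneousComponent n q) := by
  apply MvPolynomial.ext; intro m
  rw [coeff_homogeneousComponent, coeff_map, coeff_map, coeff_homogeneousComponent]
  split_ifs
  · rfl
  · exact (map_zero φ).symm

lemma smooth_C_mul {F : Type*} [Field F] {ℓ : ℕ} (u : F) (hu : u ≠ 0)
    (g : MvPolynomial (Fin ℓ) F) (hg : IsSmoothPoly g) : IsSmoothPoly (C u * g) := by
  intro x h0 h1
  have hinj := (algebraMap F (AlgebraicClosure F)).injective
  have humap : algebraMap F (AlgebraicClosure F) u ≠ 0 := fun hc => hu (hinj (by rwa [map_zero]))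
  apply hg x
  · rw [map_mul, map_C, eval_mul, eval_C] at h0
    exact (mul_eq_zero.mp h0).resolve_left humap
  · intro i
    have h1i := h1 i
    rw [pderiv_C_mul, map_mul, map_C, eval_mul, eval_C] at h1i
    exact (mul_eq_zero.mp h1i).resolve_left humap

/-- If `h ∈ ℤ[x₁,…,x_ℓ]` has `h(0) = 0` and its highest and lowest degree homogeneous
parts are smooth over `ℚ̄`, then (choosing `z_p = 0` for all `p`) there is a finite set
of primes `X` so that for all primes `p ∉ X` and all `d ≥ 1`, the auxiliary polynomial
`h_d(x) = h(d·x)/d^j` is Deligne modulo `p`. -/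
theorem stmt_7 (ℓ : ℕ) (hℓ : 2 ≤ ℓ) (h : MvPolynomial (Fin ℓ) ℤ) (h0 : h ≠ 0)
    (hconst : constantCoeff h = 0)
    (k j : ℕ) (hk : k = h.totalDegree)
    (hjne : homogeneousComponent j h ≠ 0)
    (hjmin : ∀ i < j, homogeneousComponent i h = 0)
    (hksmooth : IsSmoothPoly (map (Int.castRingHom ℚ) (homogeneousComponent k h)))
    (hjsmooth : IsSmoothPoly (map (Int.castRingHom ℚ) (homogeneousComponent j h))) :
    ∃ XS : Finset ℕ, ∀ (p : ℕ) [Fact p.Prime], p ∉ XS →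
      ∀ d : ℕ, 0 < d → ∀ hd : MvPolynomial (Fin ℓ) ℤ,
        (∀ y : Fin ℓ → ℤ, (d : ℤ) ^ j * eval y hd = eval (fun i => (d : ℤ) * y i) h) →
        IsDelignePoly (map (Int.castRingHom (ZMod p)) hd) := by
  classical
  have hcoeff0 : coeff 0 h = 0 := by rw [← MvPolynomial.constantCoeff_eq]; exact hconst
  -- the top coefficient witness
  obtain ⟨m0, hm0mem, hm0deg⟩ :=
    Finset.exists_mem_eq_sup h.support (MvPolynomial.support_nonempty.mpr h0)
      fun m => m.sum fun _ e => e
  have hm0deg' : m0.degree = k := by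
    rw [hk]; rw [MvPolynomial.totalDegree, hm0deg]; rfl
  have hm0 : coeff m0 h ≠ 0 := MvPolynomial.mem_support_iff.mp hm0mem
  have hm0k : coeff m0 (homogeneousComponent k h) = coeff m0 h := by
    rw [coeff_homogeneousComponent, if_pos hm0deg']
  have hkne : homogeneousComponent k h ≠ 0 := fun hc => hm0 (by rw [← hm0k, hc, coeff_zero])
  -- the bottom coefficient witness
  obtain ⟨m1, hm1⟩ := MvPolynomial.ne_zero_iff.mp hjne
  have hm1deg : m1.degree = j := by
    by_contra hc
    rw [coeff_homogeneousComponent, if_neg hc] at hm1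
    exact hm1 rfl
  have hm1j : coeff m1 (homogeneousComponent j h) = coeff m1 h := by
    rw [coeff_homogeneousComponent, if_pos hm1deg]
  have hm1h : coeff m1 h ≠ 0 := fun hc => hm1 (by rw [hm1j, hc])
  -- degrees are nonzero and ordered
  have hjne0 : j ≠ 0 := by
    intro hc
    subst hc
    rw [homogeneousComponent_zero, hcoeff0, map_zero] at hjne
    exact hjne rfl
  have hkne0 : k ≠ 0 := by
    intro hc
    subst hc
    rw [homogeneousComponent_zero, hcoeff0, map_zero] at hkne
    exact hkne rfl
  have hjk : j ≤ k := by
    by_contra hc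
    push_neg at hc
    exact hjne (homogeneousComponent_eq_zero j h (by rw [← hk]; exact hc))
  -- Part A for both components
  obtain ⟨ck, hck0, hcksm⟩ := partA (homogeneousComponent k h) hksmooth
  obtain ⟨cj, hcj0, hcjsm⟩ := partA (homogeneousComponent j h) hjsmooth
  set Mbig : ℕ := j * k * ck.natAbs * cj.natAbs * (coeff m0 h).natAbs * (coeff m1 h).natAbs
    with hMbig
  have hMne : Mbig ≠ 0 :=
    Nat.mul_ne_zero (Nat.mul_ne_zero (Nat.mul_ne_zero (Nat.mul_ne_zero
      (Nat.mul_ne_zero hjne0 hkne0) (Int.natAbs_ne_zero.mpr hck0))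
      (Int.natAbs_ne_zero.mpr hcj0)) (Int.natAbs_ne_zero.mpr hm0))
      (Int.natAbs_ne_zero.mpr hm1h)
  refine ⟨Mbig.primeFactors, ?_⟩
  intro p hp hpX d hd0 hd heval
  have hpP := hp.out
  have hnotdvd : ∀ m : ℕ, m ∣ Mbig → ¬ p ∣ m := fun m hm hpm =>
    hpX (Nat.mem_primeFactors.mpr ⟨hpP, hpm.trans hm, hMne⟩)
  have hpj : ¬ p ∣ j := hnotdvd j ⟨k * ck.natAbs * cj.natAbs * (coeff m0 h).natAbs * (coeff m1 h).natAbs, by ring⟩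
  have hpk : ¬ p ∣ k := hnotdvd k ⟨j * ck.natAbs * cj.natAbs * (coeff m0 h).natAbs * (coeff m1 h).natAbs, by ring⟩
  have hIntAbs : ∀ z : ℤ, z.natAbs ∣ Mbig → ¬ (p : ℤ) ∣ z := by
    intro z hz hc
    have := Int.natAbs_dvd_natAbs.mpr hc
    rw [Int.natAbs_natCast] at this
    exact hnotdvd z.natAbs hz this
  have hpck : ¬ (p : ℤ) ∣ ck := hIntAbs ck ⟨j * k * cj.natAbs * (coeff m0 h).natAbs * (coeff m1 h).natAbs, by ring⟩
  have hpcj : ¬ (p : ℤ) ∣ cj := hIntAbs cj ⟨j * k * ck.natAbs * (coeff m0 h).natAbs * (coeff m1 h).natAbs, by ring⟩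
  have hpa0 : ¬ (p : ℤ) ∣ coeff m0 h := hIntAbs _ ⟨j * k * ck.natAbs * cj.natAbs * (coeff m1 h).natAbs, by ring⟩
  have hpa1 : ¬ (p : ℤ) ∣ coeff m1 h := hIntAbs _ ⟨j * k * ck.natAbs * cj.natAbs * (coeff m0 h).natAbs, by ring⟩
  -- structure of hd
  have compn := hd_comp d hd0 j h hd hjmin heval
  set φ : ℤ →+* ZMod p := Int.castRingHom (ZMod p) with hφ
  set q : MvPolynomial (Fin ℓ) (ZMod p) := map φ hd with hq
  have hcoeff_hd : ∀ m : Fin ℓ →₀ ℕ,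
      coeff m hd = (d : ℤ) ^ (m.degree - j) * coeff m (homogeneousComponent m.degree h) := by
    intro m
    have h1 : coeff m hd = coeff m (homogeneousComponent m.degree hd) := by
      rw [coeff_homogeneousComponent, if_pos rfl]
    rw [h1, compn, coeff_C_mul]
  by_cases hpd : p ∣ d
  · -- p divides d : reduction is the bottom component
    have hdz : ((d : ℕ) : ZMod p) = 0 := (ZMod.natCast_eq_zero_iff d p).mpr hpd
    have hsup : ∀ m : Fin ℓ →₀ ℕ, j < m.degree → coeff m q = 0 := by
      intro m hm
      rw [hq, coeff_map, hcoeff_hd m, map_mul, map_pow]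
      have : φ ((d : ℕ) : ℤ) = 0 := by
        rw [hφ]; simp only [eq_intCast, Int.cast_natCast]; exact hdz
      rw [this, zero_pow (Nat.sub_ne_zero_of_lt hm), zero_mul]
    have hq1 : coeff m1 q = ((coeff m1 h : ℤ) : ZMod p) := by
      rw [hq, coeff_map, hcoeff_hd m1, hm1deg, Nat.sub_self, pow_zero, one_mul, hm1j]
      rfl
    have hq1ne : coeff m1 q ≠ 0 := by
      rw [hq1, Ne, ZMod.intCast_zmod_eq_zero_iff_dvd]
      exact hpa1
    have htot : q.totalDegree = j := by
      apply le_antisymm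
      · rw [MvPolynomial.totalDegree]
        apply Finset.sup_le
        intro m hm
        by_contra hc
        push_neg at hc
        exact MvPolynomial.mem_support_iff.mp hm (hsup m hc)
      · have := MvPolynomial.le_totalDegree (MvPolynomial.mem_support_iff.mpr hq1ne)
        calc j = m1.degree := hm1deg.symm
          _ ≤ q.totalDegree := this
    have hcompq : homogeneousComponent j q = map φ (homogeneousComponent j h) := by
      rw [hq, map_homComp, compn j, Nat.sub_self, pow_zero, map_one, one_mul]
    refine ⟨?_, ?_⟩
    · rw [htot, ZMod.ringChar_zmod_n]
      exact hpj
    · rw [htot, hcompq]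
      exact hcjsm p hpcj
  · -- p does not divide d : reduction has the top component
    have hdz : ((d : ℕ) : ZMod p) ≠ 0 := fun hc =>
      hpd ((ZMod.natCast_eq_zero_iff d p).mp hc)
    have hsup : ∀ m : Fin ℓ →₀ ℕ, k < m.degree → coeff m q = 0 := by
      intro m hm
      rw [hq, coeff_map, hcoeff_hd m,
        homogeneousComponent_eq_zero _ h (by rw [← hk]; exact hm), coeff_zero, mul_zero, map_zero]
    set u : ZMod p := ((d : ℕ) : ZMod p) ^ (k - j) with hu
    have hune : u ≠ 0 := pow_ne_zero _ hdz
    have hφd : φ ((d : ℤ) ^ (k - j)) = u := by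
      rw [hφ, hu]; simp only [eq_intCast, Int.cast_pow, Int.cast_natCast]
    have hq0 : coeff m0 q = u * ((coeff m0 h : ℤ) : ZMod p) := by
      rw [hq, coeff_map, hcoeff_hd m0, hm0deg', map_mul, hφd, hm0k]
      rfl
    have hq0ne : coeff m0 q ≠ 0 := by
      rw [hq0]
      apply mul_ne_zero hune
      rw [Ne, ZMod.intCast_zmod_eq_zero_iff_dvd]
      exact hpa0
    have htot : q.totalDegree = k := by
      apply le_antisymm
      · rw [MvPolynomial.totalDegree]
        apply Finset.sup_le
        intro m hm
        by_contra hc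
        push_neg at hc
        exact MvPolynomial.mem_support_iff.mp hm (hsup m hc)
      · have := MvPolynomial.le_totalDegree (MvPolynomial.mem_support_iff.mpr hq0ne)
        calc k = m0.degree := hm0deg'.symm
          _ ≤ q.totalDegree := this
    have hcompq : homogeneousComponent k q = C u * map φ (homogeneousComponent k h) := by
      rw [hq, map_homComp, compn k, map_mul, map_C, hφd]
    refine ⟨?_, ?_⟩
    · rw [htot, ZMod.ringChar_zmod_n]
      exact hpk
    · rw [htot, hcompq]
      exact smooth_C_mul u hune _ (hcksm p hpck)
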